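/- Let G be a finitely generated group whose abelianization has no 2-torsion (i.e., a·a = 1 implies a = 1 in the abelianization of G). If ρ: G → Sp(1) is a projective representation whose associated cocycle c is not a coboundary, then ρ is irreducible: the only unit quaternions that commute with ρ(g) for every g ∈ G are 1 and −1. -/

import Mathlib

noncomputable section

open Quaternion

/-- A projective representation of `G` in the group `Sp(1)` of unit quaternions:
a function with values of norm one such that `ρ(gh)ρ(h)⁻¹ρ(g)⁻¹ ∈ {±1}`. -/
def IsProjRep {G : Type*} [Group G] (ρ : G → ℍ[ℝ]) : Prop :=
  (∀ g : G, ‖ρ g‖ = 1) ∧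
    ∀ g h : G, ρ (g * h) * (ρ h)⁻¹ * (ρ g)⁻¹ = 1 ∨ ρ (g * h) * (ρ h)⁻¹ * (ρ g)⁻¹ = -1

/-- The cocycle associated with a projective representation. -/
def cocycleOf {G : Type*} [Group G] (ρ : G → ℍ[ℝ]) (g h : G) : ℍ[ℝ] :=
  ρ (g * h) * (ρ h)⁻¹ * (ρ g)⁻¹


lemma myRootAux (z : ℂˣ) {n : ℤ} (hn : n ≠ 0) : ∃ w : ℂˣ, w ^ n = z := by
  rcases hn.lt_or_gt with h | h
  · obtain ⟨x, hx⟩ := IsAlgClosed.exists_pow_nat_eq ((z⁻¹ : ℂˣ) : ℂ)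
      (n := n.natAbs) (Int.natAbs_pos.mpr hn)
    have hx0 : x ≠ 0 := by
      intro h0; rw [h0] at hx
      exact (Units.ne_zero (z⁻¹)) (by simpa [zero_pow, Int.natAbs_ne_zero.mpr hn] using hx.symm)
    refine ⟨Units.mk0 x hx0, ?_⟩
    have hm : (Units.mk0 x hx0) ^ (n.natAbs) = z⁻¹ := by
      ext; push_cast [Units.val_inv_eq_inv_val] at hx ⊢; exact hx
    have hn' : n = -(n.natAbs : ℤ) := by
      rw [Int.ofNat_natAbs_of_nonpos h.le]; ring
    rw [hn', zpow_neg, zpow_natCast, hm, inv_inv]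
  · obtain ⟨x, hx⟩ := IsAlgClosed.exists_pow_nat_eq ((z : ℂˣ) : ℂ)
      (n := n.natAbs) (Int.natAbs_pos.mpr hn)
    have hx0 : x ≠ 0 := by
      intro h0; rw [h0] at hx
      exact (Units.ne_zero z) (by simpa [zero_pow, Int.natAbs_ne_zero.mpr hn] using hx.symm)
    refine ⟨Units.mk0 x hx0, ?_⟩
    have hm : (Units.mk0 x hx0) ^ (n.natAbs) = z := by
      ext; push_cast; exact hx
    rw [← Int.natAbs_of_nonneg h.le, zpow_natCast, hm]

instance : DivisibleBy (Additive ℂˣ) ℤ :=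
  divisibleByOfSMulRightSurj _ _ (fun {n} hn z => by
    obtain ⟨w, hw⟩ := myRootAux z.toMul hn
    exact ⟨Additive.ofMul w, by
      apply Additive.toMul.injective
      simpa using hw⟩)

lemma exists_sqrt_hom {A : Type*} [CommGroup A]
    (h2 : ∀ a : A, a * a = 1 → a = 1) (σ : A →* ℂˣ) :
    ∃ τ : A →* ℂˣ, ∀ a : A, τ a * τ a = σ a := by
  classical
  set φ : A →* A := MonoidHom.mk' (fun a => a * a)
    (fun a b => (mul_mul_mul_comm a b a b).symm ▸ rfl) with hφdef
  have hφ : Function.Injective φ := by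
    intro a b h
    have hab : a * a = b * b := h
    have h' : (a * b⁻¹) * (a * b⁻¹) = 1 := by
      rw [mul_mul_mul_comm, hab]; group
    exact mul_inv_eq_one.mp (h2 _ h')
  let e : A ≃* φ.range := MonoidHom.ofInjective hφ
  let f : φ.range →* ℂˣ := σ.comp e.symm.toMonoidHom
  let ι : φ.range →* A := φ.range.subtype
  have hι : Function.Injective (MonoidHom.toAdditive ι) := by
    intro a b h
    exact Subtype.ext h
  obtain ⟨H, hH⟩ := (Module.Baer.of_divisible (Additive ℂˣ)).extension_property_addMonoidHom
    (MonoidHom.toAdditive ι) hι (MonoidHom.toAdditive f)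
  refine ⟨MonoidHom.toAdditive.symm H, fun a => ?_⟩
  have h1 : ι (e a) = φ a := MonoidHom.ofInjective_apply hφ
  have h2' : H (MonoidHom.toAdditive ι (Additive.ofMul (e a)))
      = MonoidHom.toAdditive f (Additive.ofMul (e a)) := DFunLike.congr_fun hH _
  have h3 : f (e a) = σ a := by
    show σ (e.symm (e a)) = σ a
    rw [MulEquiv.symm_apply_apply]
  calc (MonoidHom.toAdditive.symm H) a * (MonoidHom.toAdditive.symm H) a
      = (MonoidHom.toAdditive.symm H) (a * a) := (map_mul _ _ _).symm
    _ = (MonoidHom.toAdditive.symm H) (ι (e a)) := by rw [h1]; rfl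
    _ = σ a := by
        have : H (Additive.ofMul (ι (e a))) = Additive.ofMul (f (e a)) := h2'
        rw [← h3]
        exact congrArg Additive.toMul this

lemma quat_embed (x y z : ℝ) (h : x^2 + y^2 + z^2 = 1) :
    ∃ Φ : ℂ →+* ℍ[ℝ], ∀ c : ℂ, Φ c = (⟨c.re, c.im * x, c.im * y, c.im * z⟩ : ℍ[ℝ]) := by
  refine ⟨{ toFun := fun c => (⟨c.re, c.im * x, c.im * y, c.im * z⟩ : ℍ[ℝ])
            map_one' := by ext <;> simp
            map_mul' := fun c d => by
              ext <;>
                simp only [Quaternion.re_mul, Quaternion.imI_mul, Quaternion.imJ_mul,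
                  Quaternion.imK_mul, Complex.mul_re, Complex.mul_im]
              · erw [Quaternion.re_mul]; linear_combination (c.im * d.im) * h
              · erw [Quaternion.imI_mul]; ring
              · erw [Quaternion.imJ_mul]; ring
              · erw [Quaternion.imK_mul]; ring
            map_zero' := by ext <;> simp
            map_add' := fun c d => by
              ext <;> simp [Complex.add_re, Complex.add_im, add_mul] <;> rfl },
    fun c => rfl⟩

/-- If the abelianization of a finitely generated group `G` has no 2-torsion and the cocycle
of a projective representation `ρ : G → Sp(1)` is not a coboundary, then `ρ` is irreducible:
the only unit quaternions commuting with the whole image of `ρ` are `±1`. -/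
theorem irreducible_of_cocycle_not_coboundary {G : Type*} [Group G] (hfg : Group.FG G)
    (h2 : ∀ a : Abelianization G, a * a = 1 → a = 1)
    (ρ : G → ℍ[ℝ]) (hρ : IsProjRep ρ)
    (hcob : ¬ ∃ ε : G → ℍ[ℝ], (∀ g : G, ε g = 1 ∨ ε g = -1) ∧
      ∀ g h : G, cocycleOf ρ g h = ε g * ε h * (ε (g * h))⁻¹) :
    ∀ q : ℍ[ℝ], ‖q‖ = 1 → (∀ g : G, q * ρ g = ρ g * q) → q = 1 ∨ q = -1 := by
  intro q hq hcomm
  by_contra hne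
  push_neg at hne
  obtain ⟨hq1, hqm1⟩ := hne
  apply hcob
  have hns : q.re ^ 2 + (q.imI ^ 2 + q.imJ ^ 2 + q.imK ^ 2) = 1 := by
    have h1 := Quaternion.normSq_eq_norm_mul_self q
    rw [hq, Quaternion.normSq_def'] at h1
    linarith
  have hn2 : q.imI ^ 2 + q.imJ ^ 2 + q.imK ^ 2 ≠ 0 := by
    intro h0
    have hx : q.imI = 0 := by nlinarith [sq_nonneg q.imI, sq_nonneg q.imJ, sq_nonneg q.imK]
    have hy : q.imJ = 0 := by nlinarith [sq_nonneg q.imI, sq_nonneg q.imJ, sq_nonneg q.imK]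
    have hz : q.imK = 0 := by nlinarith [sq_nonneg q.imI, sq_nonneg q.imJ, sq_nonneg q.imK]
    rcases mul_self_eq_one_iff.mp (show q.re * q.re = 1 by nlinarith) with h | h
    · exact hq1 (by ext <;> simp [h, hx, hy, hz])
    · exact hqm1 (by ext <;> simp [h, hx, hy, hz])
  have hn2pos : 0 < q.imI ^ 2 + q.imJ ^ 2 + q.imK ^ 2 :=
    lt_of_le_of_ne (by positivity) (Ne.symm hn2)
  set r := Real.sqrt (q.imI ^ 2 + q.imJ ^ 2 + q.imK ^ 2) with hrdef
  have hrpos : 0 < r := Real.sqrt_pos.mpr hn2pos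
  have hrr : r * r = q.imI ^ 2 + q.imJ ^ 2 + q.imK ^ 2 := Real.mul_self_sqrt hn2pos.le
  obtain ⟨Φ, hΦ⟩ := quat_embed (q.imI / r) (q.imJ / r) (q.imK / r)
    (by
      field_simp
      linear_combination -hrr)
  have hΦinj : Function.Injective Φ := Φ.injective
  have hexists : ∀ g : G, ∃ c : ℂ, Φ c = ρ g := by
    intro g
    refine ⟨⟨(ρ g).re, ((ρ g).imI * q.imI + (ρ g).imJ * q.imJ + (ρ g).imK * q.imK) / r⟩, ?_⟩
    have e1 := congrArg QuaternionAlgebra.imI (hcomm g)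
    have e2 := congrArg QuaternionAlgebra.imJ (hcomm g)
    have e3 := congrArg QuaternionAlgebra.imK (hcomm g)
    simp only [Quaternion.imI_mul] at e1
    simp only [Quaternion.imJ_mul] at e2
    simp only [Quaternion.imK_mul] at e3
    rw [hΦ]
    ext
    · rfl
    · show ((ρ g).imI * q.imI + (ρ g).imJ * q.imJ + (ρ g).imK * q.imK) / r * (q.imI / r)
        = (ρ g).imI
      rw [div_mul_div_comm, div_eq_iff (by positivity), hrr]
      linear_combination (q.imJ / 2) * e3 - (q.imK / 2) * e2
    · show ((ρ g).imI * q.imI + (ρ g).imJ * q.imJ + (ρ g).imK * q.imK) / r * (q.imJ / r)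
        = (ρ g).imJ
      rw [div_mul_div_comm, div_eq_iff (by positivity), hrr]
      linear_combination (q.imK / 2) * e1 - (q.imI / 2) * e3
    · show ((ρ g).imI * q.imI + (ρ g).imJ * q.imJ + (ρ g).imK * q.imK) / r * (q.imK / r)
        = (ρ g).imK
      rw [div_mul_div_comm, div_eq_iff (by positivity), hrr]
      linear_combination (q.imI / 2) * e2 - (q.imJ / 2) * e1
  choose ζ hζ using hexists
  have hρ0 : ∀ g : G, ρ g ≠ 0 := by
    intro g h0
    have := hρ.1 g
    rw [h0] at this
    simpa using this
  have hζ0 : ∀ g : G, ζ g ≠ 0 := by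
    intro g h0
    apply hρ0 g
    rw [← hζ g, h0, map_zero]
  have hmul : ∀ g h : G, ζ (g * h) = ζ g * ζ h ∨ ζ (g * h) = -(ζ g * ζ h) := by
    intro g h
    rcases hρ.2 g h with hc | hc
    · left
      apply hΦinj
      rw [map_mul, hζ, hζ, hζ]
      have h1 : ρ (g * h) * (ρ h)⁻¹ = ρ g := by
        have := congrArg (· * ρ g) hc
        simpa [mul_assoc, inv_mul_cancel₀ (hρ0 g)] using this
      have := congrArg (· * ρ h) h1
      simpa [mul_assoc, inv_mul_cancel₀ (hρ0 h)] using this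
    · right
      apply hΦinj
      rw [map_neg, map_mul, hζ, hζ, hζ]
      have h1 : ρ (g * h) * (ρ h)⁻¹ = -ρ g := by
        have := congrArg (· * ρ g) hc
        simpa [mul_assoc, inv_mul_cancel₀ (hρ0 g)] using this
      have := congrArg (· * ρ h) h1
      simpa [mul_assoc, inv_mul_cancel₀ (hρ0 h)] using this
  set σ : G →* ℂˣ := MonoidHom.mk'
    (fun g => Units.mk0 (ζ g * ζ g) (mul_ne_zero (hζ0 g) (hζ0 g)))
    (by
      intro g h
      ext
      simp only [Units.val_mul, Units.val_mk0]
      rcases hmul g h with H | H <;> rw [H] <;> ring) with hσdef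
  have hσval : ∀ g : G, ((σ g : ℂˣ) : ℂ) = ζ g * ζ g := fun g => rfl
  obtain ⟨τ, hτ⟩ := exists_sqrt_hom h2 (Abelianization.lift σ)
  set t : G → ℂ := fun g => ((τ (Abelianization.of g) : ℂˣ) : ℂ) with htdef
  have ht0 : ∀ g : G, t g ≠ 0 := fun g => Units.ne_zero _
  have htmul : ∀ g h : G, t (g * h) = t g * t h := by
    intro g h
    show ((τ (Abelianization.of (g * h)) : ℂˣ) : ℂ) = _
    rw [map_mul, map_mul, Units.val_mul]
  have htsq : ∀ g : G, t g * t g = ζ g * ζ g := by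
    intro g
    have h1 := hτ (Abelianization.of g)
    calc t g * t g = ((τ (Abelianization.of g) * τ (Abelianization.of g) : ℂˣ) : ℂ) :=
          (Units.val_mul _ _).symm
      _ = ((Abelianization.lift σ (Abelianization.of g) : ℂˣ) : ℂ) := by rw [h1]
      _ = ζ g * ζ g := by rw [Abelianization.lift_apply_of]; exact hσval g
  set β : G → ℂ := fun g => ζ g * (t g)⁻¹ with hβdef
  have hβval : ∀ g : G, β g = ζ g * (t g)⁻¹ := fun g => rfl
  have hβ : ∀ g : G, β g = 1 ∨ β g = -1 := by
    intro g
    apply mul_self_eq_one_iff.mp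
    rw [hβval]
    have hre : ζ g * (t g)⁻¹ * (ζ g * (t g)⁻¹) = (ζ g * ζ g) * (t g * t g)⁻¹ := by
      rw [mul_inv]
      ring
    rw [hre, ← htsq g, mul_inv_cancel₀ (mul_ne_zero (ht0 g) (ht0 g))]
  refine ⟨fun g => Φ (β g), fun g => ?_, fun g h => ?_⟩
  · rcases hβ g with H | H
    · left; show Φ (β g) = 1; rw [H, map_one]
    · right; show Φ (β g) = -1; rw [H, map_neg, map_one]
  · have hC : ζ (g * h) * (ζ h)⁻¹ * (ζ g)⁻¹ = β g * β h * (β (g * h))⁻¹ := by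
      rw [hβval, hβval, hβval, htmul g h]
      rcases hmul g h with H | H <;>
        rw [H] <;> field_simp [hζ0 g, hζ0 h, ht0 g, ht0 h] <;> ring
    show cocycleOf ρ g h = Φ (β g) * Φ (β h) * (Φ (β (g * h)))⁻¹
    rw [cocycleOf, ← hζ g, ← hζ h, ← hζ (g * h), ← map_inv₀, ← map_inv₀, ← map_mul, ← map_mul,
      hC, map_mul, map_mul, map_inv₀]
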